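/- arXiv:2105.08003 — 2 statements merged into one kernel-verified Lean document; each statement's English description precedes it below -/
import Mathlib

section
/- Let T = p_1^{e_1} ··· p_r^{e_r} be the prime factorization of an odd integer T ≥ 3 with pairwise distinct primes p_1, ..., p_r and e_i ≥ 1. Then for every non-constant sequence (s_n) over F_2 of period T, the linear complexity satisfies L(s_n) ≥ min{ord_{p_1}(2), ..., ord_{p_r}(2)} + S(1), where S(1) = Σ_{n=0}^{T-1} s_n computed in F_2 and identified with an element of {0, 1}, and ord_m(2) denotes the multiplicative order of 2 modulo m. -/
open Polynomial


lemma lemA (T : ℕ) (hT : 3 ≤ T) (hodd : Odd T)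
    (f : Polynomial (ZMod 2)) (hf : Irreducible f)
    (hfΦ : f ∣ ∑ n ∈ Finset.range T, (X : Polynomial (ZMod 2)) ^ n) :
    T.primeFactors.inf' (Nat.nonempty_primeFactors.mpr (by omega))
        (fun q => orderOf ((2 : ZMod q))) ≤ f.natDegree := by
  have hT2 : (T : ZMod 2) = 1 := by
    rw [← ZMod.natCast_mod, Nat.odd_iff.mp hodd, Nat.cast_one]
  haveI : Fact (Irreducible f) := ⟨hf⟩
  have hf0 : f ≠ 0 := hf.ne_zero
  set k := f.natDegree with hk
  have hkpos : 0 < k := hf.natDegree_pos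
  let pb := AdjoinRoot.powerBasis hf0
  haveI : Fintype (AdjoinRoot f) := Module.fintypeOfFintype pb.basis
  have hcard : Fintype.card (AdjoinRoot f) = 2 ^ k := by
    rw [Module.card_eq_pow_finrank (K := ZMod 2), ZMod.card, pb.finrank, AdjoinRoot.powerBasis_dim]
  set α := AdjoinRoot.root f with hα
  have hΦα : (aeval α) (∑ n ∈ Finset.range T, (X : Polynomial (ZMod 2)) ^ n) = 0 := by
    rw [AdjoinRoot.aeval_eq, AdjoinRoot.mk_eq_zero]; exact hfΦ
  have hΦα' : ∑ n ∈ Finset.range T, α ^ n = 0 := by simpa using hΦα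
  have hαT : α ^ T = 1 := by
    have h := geom_sum_mul α T
    rw [hΦα', zero_mul] at h
    exact sub_eq_zero.mp h.symm
  have hα1 : α ≠ 1 := by
    intro h
    rw [h] at hΦα'
    simp only [one_pow, Finset.sum_const, Finset.card_range, nsmul_eq_mul, mul_one] at hΦα'
    rw [show ((T : AdjoinRoot f)) = algebraMap (ZMod 2) (AdjoinRoot f) (T : ZMod 2) by push_cast; simp] at hΦα'
    rw [hT2, map_one] at hΦα'
    exact one_ne_zero hΦα'
  have hα0 : α ≠ 0 := by
    intro h
    rw [h, zero_pow (by omega)] at hαT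
    exact zero_ne_one hαT
  set d := orderOf α with hd
  have hdT : d ∣ T := orderOf_dvd_of_pow_eq_one hαT
  have hd1 : d ≠ 1 := fun h => hα1 (orderOf_eq_one_iff.mp h)
  -- α ^ (2^k - 1) = 1
  have hfrob : α ^ (2 ^ k) = α := by
    have := FiniteField.pow_card α
    rwa [hcard] at this
  have hpow : α ^ (2 ^ k - 1) = 1 := by
    have h2k : 1 ≤ 2 ^ k := Nat.one_le_two_pow
    have : α ^ (2 ^ k - 1) * α = α := by
      rw [← pow_succ, Nat.sub_add_cancel h2k, hfrob]
    field_simp at this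
    exact this
  have hdvd : d ∣ 2 ^ k - 1 := orderOf_dvd_of_pow_eq_one hpow
  set q := d.minFac with hq
  have hqp : q.Prime := Nat.minFac_prime hd1
  have hqd : q ∣ d := Nat.minFac_dvd d
  have hqmem : q ∈ T.primeFactors :=
    Nat.mem_primeFactors.mpr ⟨hqp, hqd.trans hdT, by omega⟩
  have hq2 : (2 : ZMod q) ^ k = 1 := by
    have hqdvd : q ∣ 2 ^ k - 1 := hqd.trans hdvd
    have : ((2 ^ k - 1 : ℕ) : ZMod q) = 0 := (ZMod.natCast_eq_zero_iff _ _).mpr hqdvd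
    have h2k : 1 ≤ 2 ^ k := Nat.one_le_two_pow
    have h1 : ((2 ^ k : ℕ) : ZMod q) = 1 := by
      rw [show (2 ^ k : ℕ) = (2 ^ k - 1) + 1 by omega, Nat.cast_add, this, Nat.cast_one,
        zero_add]
    push_cast at h1
    exact h1
  have hord : orderOf (2 : ZMod q) ≤ k :=
    Nat.le_of_dvd hkpos (orderOf_dvd_of_pow_eq_one hq2)
  exact le_trans (Finset.inf'_le _ hqmem) hord

/-- Let `T ≥ 3` be odd. For every non-constant sequence `(s_n)` over `F_2` of period `T`,
the linear complexity `L(s_n) = T - deg(gcd(X^T - 1, S(X)))` satisfies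
`L(s_n) ≥ min{ord_{q}(2) : q prime, q ∣ T} + S(1)`, where `S(1) = Σ_{n<T} s_n ∈ F_2`
is identified with an element of `{0, 1}`. -/
theorem linear_complexity_lower_bound_general (T : ℕ) (hT : 3 ≤ T) (hodd : Odd T)
    (s : ℕ → ZMod 2) (hper : ∀ n, s (n + T) = s n)
    (hnc : ∃ n, n < T ∧ ∃ m, m < T ∧ s n ≠ s m) :
    T.primeFactors.inf' (Nat.nonempty_primeFactors.mpr (by omega))
        (fun q => orderOf ((2 : ZMod q))) +
      (∑ n ∈ Finset.range T, s n).val ≤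
    T - (EuclideanDomain.gcd ((X : Polynomial (ZMod 2)) ^ T - 1)
          (∑ n ∈ Finset.range T, Polynomial.C (s n) * X ^ n)).natDegree := by
  set m := T.primeFactors.inf' (Nat.nonempty_primeFactors.mpr (by omega))
        (fun q => orderOf ((2 : ZMod q))) with hm
  set Φ : Polynomial (ZMod 2) := ∑ n ∈ Finset.range T, X ^ n with hΦ
  set P : Polynomial (ZMod 2) := X ^ T - 1 with hP
  set S : Polynomial (ZMod 2) := ∑ n ∈ Finset.range T, Polynomial.C (s n) * X ^ n with hS
  set G : Polynomial (ZMod 2) := EuclideanDomain.gcd P S with hG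
  have hfact : Φ * (X - 1) = P := geom_sum_mul X T
  have hΦ0 : Φ ≠ 0 := by
    intro h
    have := congrArg (fun p => Polynomial.coeff p 0) h
    simp [hΦ, Polynomial.coeff_X_pow, Finset.sum_ite_eq'] at this
    omega
  have hP0 : P ≠ 0 := by
    rw [← hfact]
    have h1 : (X - 1 : Polynomial (ZMod 2)) ≠ 0 := by
      simpa using X_sub_C_ne_zero (1 : ZMod 2)
    exact mul_ne_zero hΦ0 h1
  have hPdeg : P.natDegree = T := by
    simpa [hP] using natDegree_X_pow_sub_C (n := T) (r := (1 : ZMod 2))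
  have hScoeff : ∀ n < T, S.coeff n = s n := by
    intro n hn
    rw [hS, Polynomial.finset_sum_coeff]
    simp [Polynomial.coeff_X_pow]
    intro h; omega
  have hT2 : (T : ZMod 2) = 1 := by
    rw [← ZMod.natCast_mod, Nat.odd_iff.mp hodd, Nat.cast_one]
  have hsq : Squarefree P := by
    have hsep : Separable P := by
      have := separable_X_pow_sub_C (F := ZMod 2) (n := T) (1 : ZMod 2)
        (by rw [hT2]; exact one_ne_zero) one_ne_zero
      simpa [hP] using this
    exact hsep.squarefree
  have hsqΦ : Squarefree Φ := (Squarefree.squarefree_of_dvd ⟨X - 1, hfact.symm⟩ hsq)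
  have hGP : G ∣ P := EuclideanDomain.gcd_dvd_left P S
  have hGS : G ∣ S := EuclideanDomain.gcd_dvd_right P S
  have hG0 : G ≠ 0 := fun h => hP0 (EuclideanDomain.gcd_eq_zero_iff.mp (hG ▸ h)).1
  obtain ⟨H, hH⟩ := hGP
  have hH0 : H ≠ 0 := fun h => hP0 (by rw [hH, h, mul_zero])
  have hdeg : G.natDegree + H.natDegree = T := by
    rw [← hPdeg, hH, Polynomial.natDegree_mul hG0 hH0]
  -- the sequence values forced to 1 if Φ ∣ S
  obtain ⟨a, ha, b, hb, hab⟩ := hnc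
  have hS0 : S ≠ 0 := by
    intro h
    apply hab
    rw [← hScoeff a ha, ← hScoeff b hb, h]
    simp
  have hSneΦ : ¬ Φ ∣ S := by
    intro hdvd
    have hΦdeg : Φ.natDegree = T - 1 := by
      have := congrArg Polynomial.natDegree hfact
      rw [Polynomial.natDegree_mul hΦ0 (by simpa using X_sub_C_ne_zero (1 : ZMod 2)),
        hPdeg] at this
      have hx1 : (X - 1 : Polynomial (ZMod 2)).natDegree = 1 := by
        rw [show (X - 1 : Polynomial (ZMod 2)) = X - C 1 by rw [map_one]]
        exact natDegree_X_sub_C (1 : ZMod 2)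
      omega
    have hSdeg : S.natDegree ≤ T - 1 := by
      rw [hS]
      apply Polynomial.natDegree_sum_le_of_forall_le
      intro i hi
      refine le_trans (Polynomial.natDegree_C_mul_le _ _) ?_
      simp only [Polynomial.natDegree_X_pow]
      exact Nat.le_pred_of_lt (Finset.mem_range.mp hi)
    obtain ⟨u, hu⟩ := hdvd
    have hu0 : u ≠ 0 := fun h => hS0 (by rw [hu, h, mul_zero])
    have hudeg : u.natDegree = 0 := by
      have := congrArg Polynomial.natDegree hu
      rw [Polynomial.natDegree_mul hΦ0 hu0] at this
      omega
    have huC : u = Polynomial.C (u.coeff 0) := Polynomial.eq_C_of_natDegree_eq_zero hudeg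
    have hc : u.coeff 0 = 1 := by
      have : u.coeff 0 ≠ 0 := fun h => hu0 (by rw [huC, h, map_zero])
      revert this; generalize u.coeff 0 = c; revert c; decide
    have hSE : S = Φ := by rw [hu, huC, hc, map_one, mul_one]
    apply hab
    have h1 : ∀ n < T, S.coeff n = 1 := by
      intro n hn
      rw [hSE, hΦ, Polynomial.finset_sum_coeff]
      simp [Polynomial.coeff_X_pow]
      omega
    rw [← hScoeff a ha, ← hScoeff b hb, h1 a ha, h1 b hb]
  have hx1 : (X - 1 : Polynomial (ZMod 2)) = X - C 1 := by rw [map_one]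
  have hx1deg : (X - 1 : Polynomial (ZMod 2)).natDegree = 1 := by
    rw [hx1]; exact natDegree_X_sub_C (1 : ZMod 2)
  have hx10 : (X - 1 : Polynomial (ZMod 2)) ≠ 0 := by
    rw [hx1]; exact X_sub_C_ne_zero 1
  have hΦG : ¬ Φ ∣ G := fun h => hSneΦ (h.trans hGS)
  set D := EuclideanDomain.gcd Φ G with hD
  have hDG : D ∣ G := EuclideanDomain.gcd_dvd_right Φ G
  obtain ⟨E, hE⟩ := EuclideanDomain.gcd_dvd_left Φ G
  have hE0 : E ≠ 0 := fun h => hΦ0 (by rw [hE, h, mul_zero])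
  have hEΦ : E ∣ Φ := ⟨D, by rw [hE, mul_comm]⟩
  have hEnu : ¬ IsUnit E := by
    intro h
    obtain ⟨v, hv⟩ := isUnit_iff_exists_inv.mp h
    exact hΦG ((Dvd.intro v (by rw [hE, mul_assoc, hv, mul_one])).trans hDG)
  have hEG : IsCoprime E G := by
    rw [← EuclideanDomain.gcd_isUnit_iff]
    apply hsqΦ
    have hgD : EuclideanDomain.gcd E G ∣ D :=
      EuclideanDomain.dvd_gcd ((EuclideanDomain.gcd_dvd_left E G).trans hEΦ)
        (EuclideanDomain.gcd_dvd_right E G)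
    rw [hE]
    exact mul_dvd_mul hgD (EuclideanDomain.gcd_dvd_left E G)
  have hEH : E ∣ H := by
    have hEP : E ∣ G * H := by
      rw [← hH]
      exact hEΦ.trans ⟨X - 1, hfact.symm⟩
    exact hEG.dvd_of_dvd_mul_left hEP
  obtain ⟨f, hfirr, hfE⟩ := WfDvdMonoid.exists_irreducible_factor hEnu hE0
  have hfΦ : f ∣ Φ := hfE.trans hEΦ
  have hfH : f ∣ H := hfE.trans hEH
  have hmf : m ≤ f.natDegree := by
    rw [hm]
    exact lemA T hT hodd f hfirr hfΦ
  have hGdegle : G.natDegree ≤ T := by omega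
  suffices h : m + (∑ n ∈ Finset.range T, s n).val ≤ H.natDegree by omega
  have hfprime : Prime f := hfirr.prime
  by_cases hv : (∑ n ∈ Finset.range T, s n) = 0
  · rw [hv]
    simpa using le_trans hmf (Polynomial.natDegree_le_of_dvd hfH hH0)
  · have hv1 : (∑ n ∈ Finset.range T, s n) = 1 := by
      revert hv; generalize (∑ n ∈ Finset.range T, s n) = c; revert c; decide
    rw [hv1]
    have hSeval : S.eval 1 = 1 := by
      rw [hS]; simp [eval_finset_sum]
      exact hv1
    have hXS : ¬ (X - 1 : Polynomial (ZMod 2)) ∣ S := by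
      rw [hx1, Polynomial.dvd_iff_isRoot]
      intro h
      rw [Polynomial.IsRoot, hSeval] at h
      exact one_ne_zero h
    have hXG : ¬ (X - 1 : Polynomial (ZMod 2)) ∣ G := fun h => hXS (h.trans hGS)
    have hXprime : Prime (X - 1 : Polynomial (ZMod 2)) := by
      rw [hx1]; exact (Polynomial.irreducible_X_sub_C (1 : ZMod 2)).prime
    have hXH : (X - 1 : Polynomial (ZMod 2)) ∣ H := by
      have : (X - 1 : Polynomial (ZMod 2)) ∣ G * H := by
        rw [← hH, ← hfact]; exact Dvd.intro_left Φ rfl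
      rcases hXprime.dvd_mul.mp this with h | h
      · exact absurd h hXG
      · exact h
    obtain ⟨H₂, hH₂⟩ := hXH
    have hH₂0 : H₂ ≠ 0 := fun h => hH0 (by rw [hH₂, h, mul_zero])
    have hfX : ¬ f ∣ (X - 1 : Polynomial (ZMod 2)) := by
      intro hdvd
      have hΦ1 : Φ.eval 1 = 1 := by
        rw [hΦ]; simp [eval_finset_sum]
        exact hT2
      have hmod : Φ %ₘ (X - C 1) = C (Φ.eval 1) := Polynomial.modByMonic_X_sub_C_eq_C_eval Φ 1
      have hΦeq : Φ %ₘ (X - C 1) + (X - C 1) * (Φ /ₘ (X - C 1)) = Φ :=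
        Polynomial.modByMonic_add_div Φ (X - C 1)
      have hf1 : f ∣ 1 := by
        have h2 := hΦeq
        rw [hmod, hΦ1, map_one] at h2
        rw [eq_sub_of_add_eq h2]
        exact dvd_sub hfΦ ((hx1 ▸ hdvd).trans (Dvd.intro _ rfl))
      exact hfirr.not_isUnit (isUnit_of_dvd_one hf1)
    have hfH₂ : f ∣ H₂ := by
      rw [hH₂] at hfH
      rcases hfprime.dvd_mul.mp hfH with h | h
      · exact absurd h hfX
      · exact h
    have hHdeg : H.natDegree = 1 + H₂.natDegree := by
      rw [hH₂, Polynomial.natDegree_mul hx10 hH₂0, hx1deg]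
    have : f.natDegree ≤ H₂.natDegree := Polynomial.natDegree_le_of_dvd hfH₂ hH₂0
    simp only [ZMod.val_one]
    omega
end

section
/- Let p ≥ 11 be a prime with p ≡ 1 (mod 4). Then S(1) = Σ_{n=0}^{T-1} s_n = 1 in F_2; that is, the sum Σ_{n=0}^{T-1} s_n over one period of the sequence (s_n) is odd. -/
/-- The primitive roots modulo `p` in increasing order: `g_1 < g_2 < … < g_{φ(p-1)}`
(0-indexed as a sorted list). -/
noncomputable def primRootsList (p : ℕ) : List ℕ :=
  ((Finset.Ico 1 p).filter fun g : ℕ => orderOf ((g : ZMod p)) = p - 1).sort (· ≤ ·)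

/-- The binary sequence `s_n ≡ g_{n+1} + g_{n+2} (mod 2)` of period `T = φ(p-1) - 1`,
extended `T`-periodically. -/
noncomputable def seqS (p n : ℕ) : ℕ :=
  ((primRootsList p).getD (n % (Nat.totient (p - 1) - 1)) 0 +
    (primRootsList p).getD (n % (Nat.totient (p - 1) - 1) + 1) 0) % 2

/-- Telescoping sum in characteristic 2. -/
lemma telescope_sum_char2 (f : ℕ → ZMod 2) (T : ℕ) :
    (∑ n ∈ Finset.range T, (f n + f (n + 1))) = f 0 + f T := by
  induction T with
  | zero => simp [CharTwo.add_self_eq_zero]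
  | succ T ih =>
      rw [Finset.sum_range_succ, ih]
      have h : f T + f T = 0 := CharTwo.add_self_eq_zero _
      linear_combination h

/-- Number of primitive roots in `[1, p)` is `φ(p-1)`. -/
lemma card_primRoots (p : ℕ) (hp : Nat.Prime p) [Fact p.Prime] :
    ((Finset.Ico 1 p).filter fun g : ℕ => orderOf ((g : ZMod p)) = p - 1).card
      = Nat.totient (p - 1) := by
  classical
  have hcard : Fintype.card (ZMod p)ˣ = p - 1 := by
    rw [ZMod.card_units_eq_totient, Nat.totient_prime hp]
  have h1 : ({u : (ZMod p)ˣ | orderOf u = p - 1} : Finset _).card = Nat.totient (p - 1) :=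
    IsCyclic.card_orderOf_eq_totient (hcard ▸ dvd_refl _)
  rw [← h1]
  symm
  apply Finset.card_bij (fun (u : (ZMod p)ˣ) _ => (u : ZMod p).val)
  · intro u hu
    simp only [Finset.mem_filter, Finset.mem_univ, true_and] at hu ⊢
    refine ⟨Finset.mem_Ico.mpr ⟨?_, ZMod.val_lt ((u : ZMod p))⟩, ?_⟩
    · rcases Nat.eq_zero_or_pos (u : ZMod p).val with h0 | h0
      · exact absurd ((ZMod.val_eq_zero _).mp h0) (Units.ne_zero u)
      · exact h0
    · have hval : (((u : ZMod p).val : ℕ) : ZMod p) = (u : ZMod p) :=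
        ZMod.natCast_rightInverse _
      rw [hval, orderOf_units, hu]
  · intro u _ v _ h
    exact Units.ext (ZMod.val_injective p h)
  · intro g hg
    rw [Finset.mem_filter, Finset.mem_Ico] at hg
    obtain ⟨⟨hg1, hgp⟩, hord⟩ := hg
    have hfin : IsOfFinOrder ((g : ℕ) : ZMod p) := by
      rw [← orderOf_pos_iff, hord]
      omega
    refine ⟨hfin.unit, ?_, ?_⟩
    · simp only [Finset.mem_filter, Finset.mem_univ, true_and]
      rw [← orderOf_units]
      exact hord
    · exact ZMod.val_cast_of_lt hgp

/-- In `ZMod p` with `4 ∣ p - 1`, the negation of an element of order `p - 1` has order `p - 1`. -/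
lemma orderOf_neg_primRoot (p : ℕ) [Fact p.Prime] (h4 : 4 ∣ p - 1) (x : ZMod p)
    (hx : orderOf x = p - 1) : orderOf (-x) = p - 1 := by
  have heven : Even (p - 1) := (even_iff_two_dvd).mpr (dvd_trans (by norm_num) h4)
  have hpow : (-x) ^ (p - 1) = 1 := by
    rw [heven.neg_pow, ← hx, pow_orderOf_eq_one]
  have hdvd : orderOf (-x) ∣ p - 1 := orderOf_dvd_of_pow_eq_one hpow
  set d := orderOf (-x) with hd
  have hxd : x ^ d = (-1) ^ d := by
    calc x ^ d = ((-1) * (-x)) ^ d := by ring_nf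
    _ = (-1) ^ d * (-x) ^ d := mul_pow _ _ _
    _ = (-1) ^ d := by rw [pow_orderOf_eq_one, mul_one]
  rcases Nat.even_or_odd d with he | ho
  · have h1 : x ^ d = 1 := by rw [hxd, he.neg_one_pow]
    have := orderOf_dvd_of_pow_eq_one h1
    rw [hx] at this
    exact Nat.dvd_antisymm hdvd this
  · exfalso
    have h1 : x ^ (2 * d) = 1 := by
      rw [mul_comm, pow_mul, hxd, ← pow_mul, mul_comm, pow_mul]
      norm_num
    have h2 : p - 1 ∣ 2 * d := by
      have := orderOf_dvd_of_pow_eq_one h1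
      rwa [hx] at this
    obtain ⟨k, hk⟩ := h4
    have hodd := Nat.odd_iff.mp ho
    rw [hk] at h2
    -- 4k ∣ 2d → 2k ∣ d → d even
    obtain ⟨q, hq⟩ := h2
    have hq' : 2 * d = 4 * (k * q) := by rw [← Nat.mul_assoc]; omega
    generalize k * q = X at hq'
    omega

/-- For a prime `p ≥ 11` with `p ≡ 1 (mod 4)`, the sum `S(1) = Σ_{n=0}^{T-1} s_n`
over one period equals `1` in `F_2`, i.e. it is odd. -/
theorem period_sum_eq_one (p : ℕ) (hp : Nat.Prime p) (h11 : 11 ≤ p) (h4 : p % 4 = 1) :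
    (∑ n ∈ Finset.range (Nat.totient (p - 1) - 1), ((seqS p n : ZMod 2))) = 1 := by
  haveI : Fact p.Prime := ⟨hp⟩
  classical
  set F := ((Finset.Ico 1 p).filter fun g : ℕ => orderOf ((g : ZMod p)) = p - 1) with hF
  have hcard : F.card = Nat.totient (p - 1) := card_primRoots p hp
  set c := Nat.totient (p - 1) with hc
  have hceven : Even c := Nat.totient_even (by omega)
  have hcpos : 0 < c := Nat.totient_pos.mpr (by omega)
  have hc2 : 2 ≤ c := by
    rcases hceven with ⟨k, hk⟩; omega
  have h4dvd : 4 ∣ p - 1 := by omega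
  have hlen : (primRootsList p).length = c := by
    rw [primRootsList, Finset.length_sort, ← hF, hcard]
  have hne : F.Nonempty := Finset.card_pos.mp (by omega)
  -- closure under g ↦ p - g
  have hneg : ∀ g ∈ F, p - g ∈ F := by
    intro g hg
    rw [hF, Finset.mem_filter, Finset.mem_Ico] at hg ⊢
    obtain ⟨⟨hg1, hgp⟩, hord⟩ := hg
    refine ⟨⟨by omega, by omega⟩, ?_⟩
    have hcast : (((p - g : ℕ)) : ZMod p) = -(g : ZMod p) := by
      have : ((p : ℕ) : ZMod p) = 0 := ZMod.natCast_self p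
      push_cast [Nat.cast_sub (le_of_lt hgp)]
      rw [this]; ring
    rw [hcast]
    exact orderOf_neg_primRoot p h4dvd _ hord
  -- min + max = p
  set m := F.min' hne with hm
  set M := F.max' hne with hM
  have hmF : m ∈ F := F.min'_mem hne
  have hMF : M ∈ F := F.max'_mem hne
  have hmIco : 1 ≤ m ∧ m < p := by
    have := Finset.mem_filter.mp hmF
    exact Finset.mem_Ico.mp this.1
  have hMIco : 1 ≤ M ∧ M < p := by
    have := Finset.mem_filter.mp hMF
    exact Finset.mem_Ico.mp this.1
  have h1 : p - m ≤ M := F.le_max' _ (hneg m hmF)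
  have h2 : m ≤ p - M := F.min'_le _ (hneg M hMF)
  have hsum : m + M = p := by omega
  -- evaluate the sum
  have hT : c - 1 ≥ 1 := by omega
  have key : ∀ n ∈ Finset.range (c - 1),
      ((seqS p n : ZMod 2)) =
        (((primRootsList p).getD n 0 : ZMod 2) + ((primRootsList p).getD (n + 1) 0 : ZMod 2)) := by
    intro n hn
    rw [Finset.mem_range] at hn
    rw [seqS, Nat.mod_eq_of_lt hn, ZMod.natCast_mod]
    push_cast
    ring
  rw [Finset.sum_congr rfl key, telescope_sum_char2 (fun n => ((primRootsList p).getD n 0 : ZMod 2)) (c - 1)]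
  have hLP : primRootsList p = F.sort (· ≤ ·) := by rw [primRootsList, hF]
  have hsortlen : (F.sort (· ≤ ·)).length = c := by rw [Finset.length_sort, hcard]
  have e0 : (primRootsList p).getD 0 0 = m := by
    rw [hLP, List.getD_eq_getElem _ 0 (by rw [hsortlen]; omega)]
    have h := Finset.sorted_zero_eq_min'_aux F (by rw [hsortlen]; omega) hne
    rw [List.get_eq_getElem] at h
    exact h
  have e1 : (primRootsList p).getD (c - 1) 0 = M := by
    rw [hLP, List.getD_eq_getElem _ 0 (by rw [hsortlen]; omega)]
    have h := Finset.sorted_last_eq_max'_aux F (by rw [hsortlen]; omega) hne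
    simp only [hsortlen] at h
    exact h
  simp only [e0, e1]
  rw [← Nat.cast_add, hsum]
  have hp2 : (p : ZMod 2) = ((p % 2 : ℕ) : ZMod 2) := (ZMod.natCast_mod p 2).symm
  rw [hp2]
  have hpodd : p % 2 = 1 := by omega
  rw [hpodd, Nat.cast_one]
end
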